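/- Let G be a (2K2, K1+P4)-free graph. Then χ(G) ≤ ω(G) + 2. -/

import Mathlib

open SimpleGraph

/-- `G` contains no induced subgraph isomorphic to `H` (graph embeddings are
exactly the inclusions of induced subgraphs). -/
def IndFree {W V : Type*} (H : SimpleGraph W) (G : SimpleGraph V) : Prop :=
  IsEmpty (H ↪g G)

/-- A set of vertices is independent if its elements are pairwise nonadjacent. -/
def IsIndep {V : Type*} (G : SimpleGraph V) (s : Set V) : Prop :=
  s.Pairwise fun u v => ¬ G.Adj u v

/-- A graph is perfect if every induced subgraph has chromatic number equal to
its clique number. -/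
def IsPerfect {V : Type*} (G : SimpleGraph V) : Prop :=
  ∀ S : Set V, (G.induce S).chromaticNumber = ((G.induce S).cliqueNum : ℕ∞)

/-- `2K₂`: two disjoint edges `{0,1}` and `{2,3}`. -/
def graph2K2 : SimpleGraph (Fin 4) :=
  SimpleGraph.fromRel (fun a b => (a = 0 ∧ b = 1) ∨ (a = 2 ∧ b = 3))

/-- The path `P₄`. -/
def graphP4 : SimpleGraph (Fin 4) :=
  SimpleGraph.fromRel (fun a b => (a = 0 ∧ b = 1) ∨ (a = 1 ∧ b = 2) ∨ (a = 2 ∧ b = 3))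

/-- The path `P₃`. -/
def graphP3 : SimpleGraph (Fin 3) :=
  SimpleGraph.fromRel (fun a b => (a = 0 ∧ b = 1) ∨ (a = 1 ∧ b = 2))

/-- `P₄ ∪ K₁`: a path on `{0,1,2,3}` plus the isolated vertex `4`. -/
def graphP4K1 : SimpleGraph (Fin 5) :=
  SimpleGraph.fromRel (fun a b => (a = 0 ∧ b = 1) ∨ (a = 1 ∧ b = 2) ∨ (a = 2 ∧ b = 3))

/-- The cycle `C₄`. -/
def graphC4 : SimpleGraph (Fin 4) :=
  SimpleGraph.fromRel
    (fun a b => (a = 0 ∧ b = 1) ∨ (a = 1 ∧ b = 2) ∨ (a = 2 ∧ b = 3) ∨ (a = 3 ∧ b = 0))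

/-- The gem `K₁ + P₄`: a path on `{0,1,2,3}` plus the universal vertex `4`. -/
def graphGem : SimpleGraph (Fin 5) :=
  SimpleGraph.fromRel
    (fun a b => (a = 0 ∧ b = 1) ∨ (a = 1 ∧ b = 2) ∨ (a = 2 ∧ b = 3) ∨ (a ≠ 4 ∧ b = 4))

/-- The wheel `K₁ + C₄`: a 4-cycle on `{0,1,2,3}` plus the universal vertex `4`. -/
def graphWheel : SimpleGraph (Fin 5) :=
  SimpleGraph.fromRel
    (fun a b => (a = 0 ∧ b = 1) ∨ (a = 1 ∧ b = 2) ∨ (a = 2 ∧ b = 3) ∨ (a = 3 ∧ b = 0) ∨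
      (a ≠ 4 ∧ b = 4))

/-- `P₂ ∪ P₃`: the edge `{0,1}` together with the path `2 - 3 - 4`. -/
def graphP2P3 : SimpleGraph (Fin 5) :=
  SimpleGraph.fromRel (fun a b => (a = 0 ∧ b = 1) ∨ (a = 2 ∧ b = 3) ∨ (a = 3 ∧ b = 4))

/-- `P₂ ∪ P₄`: the edge `{0,1}` together with the path `2 - 3 - 4 - 5`. -/
def graphP2P4 : SimpleGraph (Fin 6) :=
  SimpleGraph.fromRel
    (fun a b => (a = 0 ∧ b = 1) ∨ (a = 2 ∧ b = 3) ∨ (a = 3 ∧ b = 4) ∨ (a = 4 ∧ b = 5))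

/-- `HVN`: `K₄` on `{0,1,2,3}` plus a vertex `4` adjacent to exactly `0` and `1`. -/
def graphHVN : SimpleGraph (Fin 5) :=
  SimpleGraph.fromRel (fun a b => (a < 4 ∧ b < 4) ∨ (a = 4 ∧ (b = 0 ∨ b = 1)))

/-- `K₅ - e`: the complete graph on 5 vertices minus the edge `{0,1}`. -/
def graphK5e : SimpleGraph (Fin 5) :=
  SimpleGraph.fromRel (fun a b => ¬((a = 0 ∧ b = 1) ∨ (a = 1 ∧ b = 0)))

/-- The diamond `K₄ - e`: the complete graph on 4 vertices minus the edge `{0,2}`. -/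
def graphDiamond : SimpleGraph (Fin 4) :=
  SimpleGraph.fromRel (fun a b => ¬((a = 0 ∧ b = 2) ∨ (a = 2 ∧ b = 0)))

/-- The paw: a triangle `{0,1,2}` plus a pendant vertex `3` adjacent to `0`. -/
def graphPaw : SimpleGraph (Fin 4) :=
  SimpleGraph.fromRel
    (fun a b => (a = 0 ∧ b = 1) ∨ (a = 1 ∧ b = 2) ∨ (a = 0 ∧ b = 2) ∨ (a = 0 ∧ b = 3))

/-- `K₅`. -/
def graphK5 : SimpleGraph (Fin 5) := ⊤

/-- The join `K₁ + H`: `H` together with a new universal vertex `none`. -/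
def joinK1 {W : Type*} (H : SimpleGraph W) : SimpleGraph (Option W) :=
  SimpleGraph.fromRel
    (fun a b => (∃ u v, a = some u ∧ b = some v ∧ H.Adj u v) ∨ a = none)

/-- A pseudo-split graph is a `(2K₂, C₄)`-free graph. -/
def IsPseudoSplit {V : Type*} (G : SimpleGraph V) : Prop :=
  IndFree graph2K2 G ∧ IndFree graphC4 G


section Aux

variable {V : Type*} {G : SimpleGraph V}

lemma no2K2 (h : IndFree graph2K2 G) {a b c d : V}
    (hab : G.Adj a b) (hcd : G.Adj c d)
    (hac : ¬ G.Adj a c) (had : ¬ G.Adj a d) (hbc : ¬ G.Adj b c) (hbd : ¬ G.Adj b d) :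
    False := by
  have hac' : a ≠ c := by rintro rfl; exact had hcd
  have had' : a ≠ d := by rintro rfl; exact hac hcd.symm
  have hbc' : b ≠ c := by rintro rfl; exact hbd hcd
  have hbd' : b ≠ d := by rintro rfl; exact hbc hcd.symm
  have hf : Function.Injective ![a, b, c, d] := by
    intro x y hxy
    fin_cases x <;> fin_cases y <;> simp_all <;>
      first
        | rfl
        | (exact absurd hxy hab.ne)
        | (exact absurd hxy hab.ne')
        | (exact absurd hxy hcd.ne)
        | (exact absurd hxy hcd.ne')
        | (exact absurd hxy hac')
        | (exact absurd hxy had')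
        | (exact absurd hxy hbc')
        | (exact absurd hxy hbd')
        | (exact absurd hxy.symm hac')
        | (exact absurd hxy.symm had')
        | (exact absurd hxy.symm hbc')
        | (exact absurd hxy.symm hbd')
  refine h.false ⟨⟨![a,b,c,d], hf⟩, ?_⟩
  intro x y
  fin_cases x <;> fin_cases y <;>
    simp [graph2K2, SimpleGraph.fromRel_adj, hab, hcd, hab.symm, hcd.symm,
      hac, had, hbc, hbd, hac', had', hbc', hbd',
      fun h => hac (G.adj_symm h), fun h => had (G.adj_symm h), fun h => hbc (G.adj_symm h),
      fun h => hbd (G.adj_symm h), G.irrefl] <;>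
    first
      | exact hab
      | exact hcd
      | (intro h; exact absurd h (by assumption))
      | tauto

lemma noP4 (h : IndFree graphP4 G) {a b c d : V}
    (hab : G.Adj a b) (hbc : G.Adj b c) (hcd : G.Adj c d)
    (hac : ¬ G.Adj a c) (had : ¬ G.Adj a d) (hbd : ¬ G.Adj b d) :
    False := by
  have hac' : a ≠ c := by rintro rfl; exact had hcd
  have had' : a ≠ d := by rintro rfl; exact hac hcd.symm
  have hbd' : b ≠ d := by rintro rfl; exact had hab
  have hf : Function.Injective ![a, b, c, d] := by
    intro x y hxy
    fin_cases x <;> fin_cases y <;> simp_all <;>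
      first
        | rfl
        | (exact absurd hxy hab.ne)
        | (exact absurd hxy hbc.ne)
        | (exact absurd hxy hcd.ne)
        | (exact absurd hxy.symm hab.ne)
        | (exact absurd hxy.symm hbc.ne)
        | (exact absurd hxy.symm hcd.ne)
        | (exact absurd hxy hac')
        | (exact absurd hxy had')
        | (exact absurd hxy hbd')
        | (exact absurd hxy.symm hac')
        | (exact absurd hxy.symm had')
        | (exact absurd hxy.symm hbd')
  refine h.false ⟨⟨![a,b,c,d], hf⟩, ?_⟩
  intro x y
  fin_cases x <;> fin_cases y <;>
    simp [graphP4, SimpleGraph.fromRel_adj, hac', had', hbd', G.irrefl] <;>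
    first
      | exact hab
      | exact hbc
      | exact hcd
      | exact hab.symm
      | exact hbc.symm
      | exact hcd.symm
      | (intro hh; first
          | exact hac hh
          | exact had hh
          | exact hbd hh
          | exact hac (G.adj_symm hh)
          | exact had (G.adj_symm hh)
          | exact hbd (G.adj_symm hh))
      | tauto

lemma noGem (h : IndFree graphGem G) {e a b c d : V}
    (hea : G.Adj e a) (heb : G.Adj e b) (hec : G.Adj e c) (hed : G.Adj e d)
    (hab : G.Adj a b) (hbc : G.Adj b c) (hcd : G.Adj c d)
    (hac : ¬ G.Adj a c) (had : ¬ G.Adj a d) (hbd : ¬ G.Adj b d) :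
    False := by
  have hac' : a ≠ c := by rintro rfl; exact had hcd
  have had' : a ≠ d := by rintro rfl; exact hac hcd.symm
  have hbd' : b ≠ d := by rintro rfl; exact had hab
  have hf : Function.Injective ![a, b, c, d, e] := by
    intro x y hxy
    fin_cases x <;> fin_cases y <;> simp_all <;>
      first
        | rfl
        | (exact absurd hxy hab.ne)
        | (exact absurd hxy hbc.ne)
        | (exact absurd hxy hcd.ne)
        | (exact absurd hxy.symm hab.ne)
        | (exact absurd hxy.symm hbc.ne)
        | (exact absurd hxy.symm hcd.ne)
        | (exact absurd hxy hac')
        | (exact absurd hxy had')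
        | (exact absurd hxy hbd')
        | (exact absurd hxy.symm hac')
        | (exact absurd hxy.symm had')
        | (exact absurd hxy.symm hbd')
        | (exact absurd hxy hea.ne)
        | (exact absurd hxy heb.ne)
        | (exact absurd hxy hec.ne)
        | (exact absurd hxy hed.ne)
        | (exact absurd hxy.symm hea.ne)
        | (exact absurd hxy.symm heb.ne)
        | (exact absurd hxy.symm hec.ne)
        | (exact absurd hxy.symm hed.ne)
  refine h.false ⟨⟨![a,b,c,d,e], hf⟩, ?_⟩
  intro x y
  fin_cases x <;> fin_cases y <;>
    simp [graphGem, SimpleGraph.fromRel_adj, hac', had', hbd', G.irrefl,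
      hea.ne', heb.ne', hec.ne', hed.ne'] <;>
    first
      | exact hab
      | exact hbc
      | exact hcd
      | exact hab.symm
      | exact hbc.symm
      | exact hcd.symm
      | exact hea
      | exact heb
      | exact hec
      | exact hed
      | exact hea.symm
      | exact heb.symm
      | exact hec.symm
      | exact hed.symm
      | (intro hh; first
          | exact hac hh
          | exact had hh
          | exact hbd hh
          | exact hac (G.adj_symm hh)
          | exact had (G.adj_symm hh)
          | exact hbd (G.adj_symm hh))
      | tauto

lemma IndFree.induce {W : Type*} {H : SimpleGraph W} (h : IndFree H G) (s : Set V) :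
    IndFree H (G.induce s) :=
  ⟨fun e => h.false ((SimpleGraph.Embedding.induce s).comp e)⟩

lemma clique_of_induce {s : Set V} {t : Finset s} {n : ℕ}
    (h : (G.induce s).IsNClique n t) :
    G.IsNClique n (t.map (Function.Embedding.subtype _)) := by
  constructor
  · rintro a ha b hb hne
    simp only [Finset.coe_map, Set.mem_image, Finset.mem_coe] at ha hb
    obtain ⟨a', ha', rfl⟩ := ha
    obtain ⟨b', hb', rfl⟩ := hb
    have : a' ≠ b' := fun hh => hne (by rw [hh])
    exact h.isClique ha' hb' this
  · rw [Finset.card_map]; exact h.card_eq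

lemma cliqueNum_induce_le [Fintype V] (s : Set V) [Fintype s] :
    (G.induce s).cliqueNum ≤ G.cliqueNum := by
  obtain ⟨t, ht⟩ := (G.induce s).exists_isNClique_cliqueNum
  have := clique_of_induce ht
  have h2 := (SimpleGraph.IsClique.card_le_cliqueNum (tc := this.isClique))
  rwa [this.card_eq] at h2

lemma one_le_cliqueNum_of_mem [Fintype V] (v : V) : 1 ≤ G.cliqueNum := by
  have : G.IsClique ({v} : Finset V) := by simp
  have h2 := SimpleGraph.IsClique.card_le_cliqueNum (tc := this)
  simpa using h2

/-- combine colorings of `s` and `sᶜ` -/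
lemma colorable_sum {s : Set V} {m n : ℕ} (hm : (G.induce s).Colorable m)
    (hn : (G.induce sᶜ).Colorable n) : G.Colorable (m + n) := by
  classical
  obtain ⟨cm⟩ := hm
  obtain ⟨cn⟩ := hn
  refine ⟨SimpleGraph.Coloring.mk
    (fun v => if h : v ∈ s then Fin.castAdd n (cm ⟨v, h⟩) else Fin.natAdd m (cn ⟨v, h⟩))
    ?_⟩
  intro u w hadj
  by_cases hu : u ∈ s <;> by_cases hw : w ∈ s <;> simp only [hu, hw, dif_pos, dif_neg,
    not_false_iff]
  · have := cm.valid (show (G.induce s).Adj ⟨u, hu⟩ ⟨w, hw⟩ from hadj)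
    intro hc
    exact this (Fin.castAdd_injective _ _ hc)
  · intro hc
    have h2 := congrArg Fin.val hc
    simp only [Fin.coe_castAdd, Fin.coe_natAdd] at h2
    have h1 := (cm ⟨u, hu⟩).isLt
    omega
  · intro hc
    have h2 := congrArg Fin.val hc
    simp only [Fin.coe_castAdd, Fin.coe_natAdd] at h2
    have h1 := (cm ⟨w, hw⟩).isLt
    omega
  · have := cn.valid (show (G.induce sᶜ).Adj ⟨u, hu⟩ ⟨w, hw⟩ from hadj)
    intro hc
    have h2 := congrArg Fin.val hc
    simp only [Fin.coe_natAdd] at h2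
    exact this (Fin.ext (by omega))

lemma exists_penultimate {W : Type*} {G : SimpleGraph W} {a b : W} (p : G.Walk a b)
    (hlen : p.length ≠ 0) :
    ∃ (y : W) (q : G.Walk a y), G.Adj y b ∧ q.length + 1 = p.length := by
  induction p with
  | nil => simp at hlen
  | @cons u c w hadj q ih =>
    cases q with
    | nil => exact ⟨u, SimpleGraph.Walk.nil, hadj, by simp⟩
    | @cons c d w hadj2 q2 =>
      obtain ⟨y, r, hy, hlen2⟩ := ih (by simp)
      exact ⟨y, SimpleGraph.Walk.cons hadj r, hy, by
        simp only [SimpleGraph.Walk.length_cons] at hlen2 ⊢; omega⟩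

/-- trivially perfect: (2K2, P4)-free graphs have chi <= omega -/
theorem tpAux : ∀ (n : ℕ) (V : Type u) [Fintype V] (H : SimpleGraph V),
    Fintype.card V ≤ n → IndFree graph2K2 H → IndFree graphP4 H →
    H.Colorable (max H.cliqueNum 1) := by
  intro n
  induction n with
  | zero =>
    intro V _ H hcard _ _
    haveI : IsEmpty V := Fintype.card_eq_zero_iff.mp (Nat.le_zero.mp hcard)
    exact SimpleGraph.Colorable.of_isEmpty (G := H) _
  | succ n ih =>
    intro V _ H hcard h2 h4
    classical
    have hOfN : ∀ a b : V, ¬Hᶜ.Adj a b → a ≠ b → H.Adj a b := by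
      intro a b hno hne
      rw [SimpleGraph.compl_adj, not_and, not_not] at hno
      exact hno hne
    have hNof : ∀ a b : V, Hᶜ.Adj a b → ¬H.Adj a b := by
      intro a b hyes
      exact ((H.compl_adj a b).mp hyes).2
    by_cases hne : Nonempty V
    case neg =>
      haveI : IsEmpty V := not_nonempty_iff.mp hne
      exact SimpleGraph.Colorable.of_isEmpty (G := H) _
    obtain ⟨v0⟩ := hne
    obtain ⟨v, -, hmax⟩ := Finset.exists_max_image Finset.univ (fun u => Hᶜ.degree u)
      ⟨v0, Finset.mem_univ v0⟩
    set s : Set V := {u | Hᶜ.Reachable v u} with hs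
    by_cases hsc : ∀ u, u ∈ s
    · -- complement of H is "connected"; show v is isolated in H
      have hiso : ∀ u, u ≠ v → ¬H.Adj v u := by
        by_contra hbad
        push_neg at hbad
        obtain ⟨u1, hu1v, hu1adj⟩ := hbad
        have hbadne : (Finset.univ.filter (fun u => u ≠ v ∧ ¬Hᶜ.Adj v u)).Nonempty := by
          refine ⟨u1, ?_⟩
          simp only [Finset.mem_filter, Finset.mem_univ, true_and]
          exact ⟨hu1v, fun hc => ((H.compl_adj v u1).mp hc).2 hu1adj⟩
        obtain ⟨u0, hu0mem, hu0min⟩ := Finset.exists_min_image _ (fun u => Hᶜ.dist v u) hbadne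
        simp only [Finset.mem_filter, Finset.mem_univ, true_and] at hu0mem
        obtain ⟨hu0v, hu0nadj⟩ := hu0mem
        have hreach : Hᶜ.Reachable v u0 := hsc u0
        obtain ⟨p, hp⟩ := hreach.exists_walk_length_eq_dist
        have hd1 : 0 < Hᶜ.dist v u0 := hreach.pos_dist_of_ne hu0v.symm
        obtain ⟨y, q, hyu0, hqlen⟩ := exists_penultimate p (by omega)
        have hdy : Hᶜ.dist v y ≤ Hᶜ.dist v u0 - 1 := by
          have := SimpleGraph.dist_le q
          omega
        have hyv : y ≠ v := by
          rintro rfl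
          exact hu0nadj hyu0
        have hvy : Hᶜ.Adj v y := by
          by_contra hvy
          have : y ∈ Finset.univ.filter (fun u => u ≠ v ∧ ¬Hᶜ.Adj v u) := by
            simp only [Finset.mem_filter, Finset.mem_univ, true_and]
            exact ⟨hyv, hvy⟩
          have := hu0min y this
          omega
        -- degree contradiction: N(v) \ {y} ∪ {v, u0} ⊆ N(y) in the complement
        have hHvu0 : H.Adj v u0 := hOfN v u0 hu0nadj hu0v.symm
        have hsub : ∀ z ∈ (Hᶜ.neighborFinset v).erase y, z ∈ Hᶜ.neighborFinset y := by
          intro z hz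
          rw [Finset.mem_erase, SimpleGraph.mem_neighborFinset] at hz
          obtain ⟨hzy, hvz⟩ := hz
          rw [SimpleGraph.mem_neighborFinset]
          by_contra hzw
          have hzu0 : z ≠ u0 := by
            rintro rfl
            exact hu0nadj hvz
          have hHzy : H.Adj z y := (hOfN y z (fun hc => hzw hc) hzy.symm).symm
          have hHnvz : ¬H.Adj v z := hNof v z hvz
          have hHnvy : ¬H.Adj v y := hNof v y hvy
          have hHnyu0 : ¬H.Adj y u0 := hNof y u0 hyu0
          by_cases hzu : Hᶜ.Adj z u0
          · -- 2K2 in H on (z,y),(v,u0)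
            have hHnzu0 : ¬H.Adj z u0 := hNof z u0 hzu
            exact no2K2 h2 hHzy hHvu0 (fun hc => hHnvz (H.adj_symm hc)) hHnzu0
              (fun hc => hHnvy (H.adj_symm hc)) hHnyu0
          · -- P4 in H : y - z - u0 - v
            have hHzu0 : H.Adj z u0 := hOfN z u0 hzu hzu0
            exact noP4 h4 hHzy.symm hHzu0 hHvu0.symm hHnyu0
              (fun hc => hHnvy (H.adj_symm hc)) (fun hc => hHnvz (H.adj_symm hc))
        -- now compare degrees
        have hvmem : y ∈ Hᶜ.neighborFinset v := (SimpleGraph.mem_neighborFinset _ _ _).mpr hvy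
        have hsub2 : ((Hᶜ.neighborFinset v).erase y) ∪ {v, u0} ⊆ Hᶜ.neighborFinset y := by
          intro z hz
          rcases Finset.mem_union.mp hz with hz | hz
          · exact hsub z hz
          · rcases Finset.mem_insert.mp hz with rfl | hz
            · exact (SimpleGraph.mem_neighborFinset _ _ _).mpr hvy.symm
            · rw [Finset.mem_singleton] at hz
              subst hz
              exact (SimpleGraph.mem_neighborFinset _ _ _).mpr hyu0
        have hdisj : Disjoint ((Hᶜ.neighborFinset v).erase y) ({v, u0} : Finset V) := by
          rw [Finset.disjoint_right]
          intro z hz hz2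
          have hz3 := (SimpleGraph.mem_neighborFinset _ _ _).mp (Finset.mem_erase.mp hz2).2
          rcases Finset.mem_insert.mp hz with rfl | hz4
          · exact Hᶜ.irrefl hz3
          · rw [Finset.mem_singleton] at hz4
            subst hz4
            exact hu0nadj hz3
        have hcard2 : Hᶜ.degree v + 1 ≤ Hᶜ.degree y := by
          have h1 := Finset.card_le_card hsub2
          rw [Finset.card_union_of_disjoint hdisj, Finset.card_erase_of_mem hvmem] at h1
          have h2 : ({v, u0} : Finset V).card = 2 := by
            rw [Finset.card_insert_of_notMem (by simp [hu0v.symm]), Finset.card_singleton]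
          rw [h2] at h1
          have h3 : 1 ≤ Hᶜ.degree v := by
            rw [← SimpleGraph.card_neighborFinset_eq_degree]
            exact Finset.card_pos.mpr ⟨y, hvmem⟩
          unfold SimpleGraph.degree at *
          omega
        have := hmax y (Finset.mem_univ y)
        omega
      -- v is isolated in H; recurse on V minus v
      set t : Set V := {u | u ≠ v} with ht
      have hcardt : Fintype.card t ≤ n := by
        have h1 := Fintype.card_subtype_lt (p := fun u => u ≠ v) (x := v) (by simp)
        have h2 : Fintype.card t = Fintype.card {u // u ≠ v} :=
          Fintype.card_congr (Equiv.subtypeEquivRight (fun u => Iff.rfl))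
        rw [h2]
        exact Nat.le_of_lt_succ (lt_of_lt_of_le
          (lt_of_eq_of_lt (Fintype.card_congr (Equiv.refl _)) h1) hcard)
      have hcol := ih ↥t (H.induce t) hcardt (h2.induce t) (h4.induce t)
      have hle : max (H.induce t).cliqueNum 1 ≤ max H.cliqueNum 1 :=
        max_le_max (_root_.cliqueNum_induce_le t) le_rfl
      obtain ⟨c⟩ := hcol.mono hle
      have hpos : 0 < max H.cliqueNum 1 := lt_of_lt_of_le Nat.zero_lt_one (le_max_right _ _)
      refine ⟨SimpleGraph.Coloring.mk
        (fun u => if h : u = v then ⟨0, hpos⟩ else c ⟨u, h⟩) ?_⟩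
      intro a b hab
      by_cases ha : a = v
      · subst ha
        exact absurd hab (hiso b hab.ne')
      · by_cases hb : b = v
        · subst hb
          exact absurd hab.symm (hiso a ha)
        · simp only [dif_neg ha, dif_neg hb]
          exact c.valid (show (H.induce t).Adj ⟨a, ha⟩ ⟨b, hb⟩ from hab)
    · -- complement is disconnected: join decomposition
      push_neg at hsc
      obtain ⟨x0, hx0⟩ := hsc
      have hvs : v ∈ s := SimpleGraph.Reachable.refl v
      have hcards : Fintype.card ↥s ≤ n := by
        have h1 := Fintype.card_subtype_lt (p := fun u => u ∈ s) (x := x0) hx0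
        exact Nat.le_of_lt_succ (lt_of_lt_of_le
          (lt_of_eq_of_lt (Fintype.card_congr (Equiv.refl _)) h1) hcard)
      have hcardsc : Fintype.card ↥(sᶜ) ≤ n := by
        have h1 := Fintype.card_subtype_lt (p := fun u => u ∈ sᶜ) (x := v)
          (by simp only [Set.mem_compl_iff, not_not]; exact hvs)
        exact Nat.le_of_lt_succ (lt_of_lt_of_le
          (lt_of_eq_of_lt (Fintype.card_congr (Equiv.refl _)) h1) hcard)
      have hc1 := ih ↥s (H.induce s) hcards (h2.induce s) (h4.induce s)
      have hc2 := ih ↥(sᶜ) (H.induce sᶜ) hcardsc (h2.induce sᶜ) (h4.induce sᶜ)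
      have hcross : ∀ a ∈ s, ∀ b ∈ sᶜ, H.Adj a b := by
        intro a ha b hb
        have hne : a ≠ b := by rintro rfl; exact hb ha
        refine hOfN a b (fun hadj => hb ?_) hne
        exact (ha : Hᶜ.Reachable v a).trans hadj.reachable
      obtain ⟨t1, ht1⟩ := (H.induce s).exists_isNClique_cliqueNum
      obtain ⟨t2, ht2⟩ := (H.induce sᶜ).exists_isNClique_cliqueNum
      have hu1 := clique_of_induce ht1
      have hu2 := clique_of_induce ht2
      set T := (t1.map (Function.Embedding.subtype _)) ∪ (t2.map (Function.Embedding.subtype _))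
        with hT
      have hmems : ∀ z ∈ t1.map (Function.Embedding.subtype _), z ∈ s := by
        intro z hz
        obtain ⟨w, -, rfl⟩ := Finset.mem_map.mp hz
        exact w.2
      have hmemsc : ∀ z ∈ t2.map (Function.Embedding.subtype _), z ∈ sᶜ := by
        intro z hz
        obtain ⟨w, -, rfl⟩ := Finset.mem_map.mp hz
        exact w.2
      have hTclique : H.IsClique T := by
        intro a ha b hb hne
        simp only [hT, Finset.coe_union, Set.mem_union, Finset.mem_coe] at ha hb
        rcases ha with ha | ha <;> rcases hb with hb | hb
        · exact hu1.isClique ha hb hne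
        · exact hcross a (hmems a ha) b (hmemsc b hb)
        · exact (hcross b (hmems b hb) a (hmemsc a ha)).symm
        · exact hu2.isClique ha hb hne
      have hTdisj : Disjoint (t1.map (Function.Embedding.subtype _))
          (t2.map (Function.Embedding.subtype _)) := by
        rw [Finset.disjoint_left]
        intro z hz1 hz2
        exact (hmemsc z hz2) (hmems z hz1)
      have hTcard : T.card = (H.induce s).cliqueNum + (H.induce sᶜ).cliqueNum := by
        rw [hT, Finset.card_union_of_disjoint hTdisj, Finset.card_map, Finset.card_map,
          ht1.card_eq, ht2.card_eq]
      have hsum : (H.induce s).cliqueNum + (H.induce sᶜ).cliqueNum ≤ H.cliqueNum := by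
        have := SimpleGraph.IsClique.card_le_cliqueNum (tc := hTclique)
        omega
      have h1le : 1 ≤ (H.induce s).cliqueNum := one_le_cliqueNum_of_mem (⟨v, hvs⟩ : ↥s)
      have h2le : 1 ≤ (H.induce sᶜ).cliqueNum := one_le_cliqueNum_of_mem (⟨x0, hx0⟩ : ↥(sᶜ))
      have hcomb := colorable_sum hc1 hc2
      refine hcomb.mono ?_
      rw [max_eq_left h1le, max_eq_left h2le]
      calc (H.induce s).cliqueNum + (H.induce sᶜ).cliqueNum ≤ H.cliqueNum := hsum
        _ ≤ max H.cliqueNum 1 := le_max_left _ _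

section W

/-- Extending `K \ {v}` by two adjacent common neighbors outside `N[v]`
gives a clique larger than the clique number: contradiction. -/
lemma extend_clique [Fintype V] [DecidableEq V] {K : Finset V} {v : V}
    (hK : G.IsNClique G.cliqueNum K) (hv : v ∈ K) {a b : V}
    (hva : ¬G.Adj v a) (hvb : ¬G.Adj v b) (hab : G.Adj a b)
    (hall : ∀ u ∈ K.erase v, G.Adj u a ∧ G.Adj u b) : False := by
  classical
  have hav : v ≠ a := by rintro rfl; exact hvb hab
  have hbv : v ≠ b := by rintro rfl; exact hva hab.symm
  have haK : a ∉ K := fun h => hva (hK.isClique hv h hav)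
  have hbK : b ∉ K := fun h => hvb (hK.isClique hv h hbv)
  set S := insert a (insert b (K.erase v)) with hS
  have hSclique : G.IsClique S := by
    intro x hx y hy hxy
    simp only [hS, Finset.coe_insert, Set.mem_insert_iff, Finset.mem_coe,
      Finset.mem_erase] at hx hy
    rcases hx with rfl | rfl | ⟨hxv, hxK⟩ <;> rcases hy with rfl | rfl | hy
    · exact absurd rfl hxy
    · exact hab
    · exact ((hall y (Finset.mem_erase.mpr hy)).1).symm
    · exact hab.symm
    · exact absurd rfl hxy
    · exact ((hall y (Finset.mem_erase.mpr hy)).2).symm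
    · exact (hall x (Finset.mem_erase.mpr ⟨hxv, hxK⟩)).1
    · exact (hall x (Finset.mem_erase.mpr ⟨hxv, hxK⟩)).2
    · exact hK.isClique hxK hy.2 hxy
  have hcard : S.card = G.cliqueNum + 1 := by
    have h1 : a ∉ insert b (K.erase v) := by
      simp only [Finset.mem_insert, Finset.mem_erase]
      push_neg
      exact ⟨hab.ne, fun _ => haK⟩
    have h2 : b ∉ K.erase v := fun h => hbK (Finset.mem_of_mem_erase h)
    rw [hS, Finset.card_insert_of_notMem h1, Finset.card_insert_of_notMem h2,
      Finset.card_erase_of_mem hv, hK.card_eq]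
    have : 1 ≤ G.cliqueNum := by
      rw [← hK.card_eq]; exact Finset.card_pos.mpr ⟨v, hv⟩
    omega
  have hle := SimpleGraph.IsClique.card_le_cliqueNum (tc := hSclique)
  omega

/-- every vertex of `K` other than `v` covers each edge outside `N[v]` -/
lemma covW [Fintype V] {K : Finset V} {v : V}
    (h2 : IndFree graph2K2 G)
    (hK : G.IsNClique G.cliqueNum K) (hv : v ∈ K) {u a b : V}
    (hu : u ∈ K) (huv : u ≠ v)
    (hva : ¬G.Adj v a) (hvb : ¬G.Adj v b) (hab : G.Adj a b) :
    G.Adj u a ∨ G.Adj u b := by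
  by_contra hcon
  push_neg at hcon
  exact no2K2 h2 (hK.isClique hv hu (Ne.symm huv)) hab hva hvb hcon.1 hcon.2

lemma gemstepW [Fintype V] {K : Finset V} {v : V}
    (hg : IndFree graphGem G)
    (hK : G.IsNClique G.cliqueNum K) (hv : v ∈ K) {u1 u2 a b : V}
    (hu1 : u1 ∈ K) (hu2 : u2 ∈ K) (h1v : u1 ≠ v) (h2v : u2 ≠ v) (h12 : u1 ≠ u2)
    (hva : ¬G.Adj v a) (hvb : ¬G.Adj v b) (hab : G.Adj a b)
    (h1a : G.Adj u1 a) (h1b : G.Adj u1 b) (h2a : G.Adj u2 a) (h2b : ¬G.Adj u2 b) : False :=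
  noGem hg (hK.isClique hu1 hv h1v) (hK.isClique hu1 hu2 h12) h1a h1b
    (hK.isClique hv hu2 (Ne.symm h2v)) h2a hab hva hvb h2b

/-- no triangle among the non-neighbors of `v` -/
lemma noTriW [Fintype V] [DecidableEq V] {K : Finset V} {v : V}
    (h2 : IndFree graph2K2 G) (hg : IndFree graphGem G)
    (hK : G.IsNClique G.cliqueNum K) (hv : v ∈ K) {w1 w2 w3 : V}
    (m1 : ¬G.Adj v w1) (m2 : ¬G.Adj v w2) (m3 : ¬G.Adj v w3)
    (h12 : G.Adj w1 w2) (h13 : G.Adj w1 w3) (h23 : G.Adj w2 w3) : False := by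
  classical
  by_cases hKe : ∃ u0, u0 ∈ K.erase v
  · obtain ⟨u0, hu0e⟩ := hKe
    have hu0K := Finset.mem_of_mem_erase hu0e
    have hu0v := (Finset.mem_erase.mp hu0e).1
    have hc12 := covW h2 hK hv hu0K hu0v m1 m2 h12
    have hc13 := covW h2 hK hv hu0K hu0v m1 m3 h13
    have hc23 := covW h2 hK hv hu0K hu0v m2 m3 h23
    obtain ⟨a, b, c, hva', hvb', hvc', hab', hac', hbc', h0a, h0b⟩ :
        ∃ a b c, ¬G.Adj v a ∧ ¬G.Adj v b ∧ ¬G.Adj v c ∧ G.Adj a b ∧ G.Adj a c ∧ G.Adj b c ∧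
          G.Adj u0 a ∧ G.Adj u0 b := by
      have htwo : (G.Adj u0 w1 ∧ G.Adj u0 w2) ∨ (G.Adj u0 w1 ∧ G.Adj u0 w3) ∨
          (G.Adj u0 w2 ∧ G.Adj u0 w3) := by tauto
      rcases htwo with ⟨h, h'⟩ | ⟨h, h'⟩ | ⟨h, h'⟩
      · exact ⟨w1, w2, w3, m1, m2, m3, h12, h13, h23, h, h'⟩
      · exact ⟨w1, w3, w2, m1, m3, m2, h13, h12, h23.symm, h, h'⟩
      · exact ⟨w2, w3, w1, m2, m3, m1, h23, h12.symm, h13.symm, h, h'⟩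
    have hall : ∀ u ∈ K.erase v, G.Adj u a ∧ G.Adj u b := by
      intro u hue
      have huK := Finset.mem_of_mem_erase hue
      have huv := (Finset.mem_erase.mp hue).1
      have d1 := covW h2 hK hv huK huv hva' hvb' hab'
      have d2 := covW h2 hK hv huK huv hva' hvc' hac'
      have d3 := covW h2 hK hv huK huv hvb' hvc' hbc'
      by_cases hequ : u = u0
      · subst hequ; exact ⟨h0a, h0b⟩
      by_cases ha : G.Adj u a
      · refine ⟨ha, ?_⟩
        by_cases hb : G.Adj u b
        · exact hb
        · exact absurd (gemstepW hg hK hv hu0K huK hu0v huv (Ne.symm hequ)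
            hva' hvb' hab' h0a h0b ha hb) id
      · have hb : G.Adj u b := d1.resolve_left ha
        exact absurd (gemstepW hg hK hv hu0K huK hu0v huv (Ne.symm hequ)
          hvb' hva' hab'.symm h0b h0a hb ha) id
    exact extend_clique hK hv hva' hvb' hab' hall
  · push_neg at hKe
    exact extend_clique hK hv m1 m2 h12 (fun u hu => absurd hu (hKe u))


theorem patB : ∀ (a1 a2 a3 a4 a5 : Bool),
    (a1 || a2) = true → (a2 || a3) = true → (a3 || a4) = true → (a4 || a5) = true →
    (a5 || a1) = true →
    (a1 && a2 && a3 && a4) = false → (a2 && a3 && a4 && a5) = false →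
    (a3 && a4 && a5 && a1) = false → (a4 && a5 && a1 && a2) = false →
    (a5 && a1 && a2 && a3) = false →
    ((a1 && a2 && a4 && !a3 && !a5) = true) ∨ ((a2 && a3 && a5 && !a4 && !a1) = true) ∨
    ((a3 && a4 && a1 && !a5 && !a2) = true) ∨ ((a4 && a5 && a2 && !a1 && !a3) = true) ∨
    ((a5 && a1 && a3 && !a2 && !a4) = true) := by decide

lemma noC5Wpat [Fintype V] [DecidableEq V] {K : Finset V} {v : V}
    (h2 : IndFree graph2K2 G) (hg : IndFree graphGem G)
    (hK : G.IsNClique G.cliqueNum K) (hv : v ∈ K) {c1 c2 c3 c4 c5 : V}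
    (m1 : ¬G.Adj v c1) (m2 : ¬G.Adj v c2) (m3 : ¬G.Adj v c3) (m4 : ¬G.Adj v c4)
    (m5 : ¬G.Adj v c5)
    (e12 : G.Adj c1 c2) (e23 : G.Adj c2 c3) (e34 : G.Adj c3 c4) (e45 : G.Adj c4 c5)
    (e51 : G.Adj c5 c1)
    (n13 : ¬G.Adj c1 c3) (n14 : ¬G.Adj c1 c4) (n24 : ¬G.Adj c2 c4) (n25 : ¬G.Adj c2 c5)
    (n35 : ¬G.Adj c3 c5) {u : V} (hue : u ∈ K.erase v) :
    (G.Adj u c1 ∧ G.Adj u c2 ∧ G.Adj u c4 ∧ ¬G.Adj u c3 ∧ ¬G.Adj u c5) ∨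
    (G.Adj u c2 ∧ G.Adj u c3 ∧ G.Adj u c5 ∧ ¬G.Adj u c4 ∧ ¬G.Adj u c1) ∨
    (G.Adj u c3 ∧ G.Adj u c4 ∧ G.Adj u c1 ∧ ¬G.Adj u c5 ∧ ¬G.Adj u c2) ∨
    (G.Adj u c4 ∧ G.Adj u c5 ∧ G.Adj u c2 ∧ ¬G.Adj u c1 ∧ ¬G.Adj u c3) ∨
    (G.Adj u c5 ∧ G.Adj u c1 ∧ G.Adj u c3 ∧ ¬G.Adj u c2 ∧ ¬G.Adj u c4) := by
  have huK := Finset.mem_of_mem_erase hue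
  have huv := (Finset.mem_erase.mp hue).1
  have d1 := covW h2 hK hv huK huv m1 m2 e12
  have d2 := covW h2 hK hv huK huv m2 m3 e23
  have d3 := covW h2 hK hv huK huv m3 m4 e34
  have d4 := covW h2 hK hv huK huv m4 m5 e45
  have d5 := covW h2 hK hv huK huv m5 m1 e51
  have g1 : ¬(G.Adj u c1 ∧ G.Adj u c2 ∧ G.Adj u c3 ∧ G.Adj u c4) :=
    fun ⟨a1, a2, a3, a4⟩ => noGem hg a1 a2 a3 a4 e12 e23 e34 n13 n14 n24
  have g2 : ¬(G.Adj u c2 ∧ G.Adj u c3 ∧ G.Adj u c4 ∧ G.Adj u c5) :=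
    fun ⟨a2, a3, a4, a5⟩ => noGem hg a2 a3 a4 a5 e23 e34 e45 n24 n25 n35
  have g3 : ¬(G.Adj u c3 ∧ G.Adj u c4 ∧ G.Adj u c5 ∧ G.Adj u c1) :=
    fun ⟨a3, a4, a5, a1⟩ => noGem hg a3 a4 a5 a1 e34 e45 e51 n35
      (fun h => n13 h.symm) (fun h => n14 h.symm)
  have g4 : ¬(G.Adj u c4 ∧ G.Adj u c5 ∧ G.Adj u c1 ∧ G.Adj u c2) :=
    fun ⟨a4, a5, a1, a2⟩ => noGem hg a4 a5 a1 a2 e45 e51 e12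
      (fun h => n14 h.symm) (fun h => n24 h.symm) (fun h => n25 h.symm)
  have g5 : ¬(G.Adj u c5 ∧ G.Adj u c1 ∧ G.Adj u c2 ∧ G.Adj u c3) :=
    fun ⟨a5, a1, a2, a3⟩ => noGem hg a5 a1 a2 a3 e51 e12 e23
      (fun h => n25 h.symm) (fun h => n35 h.symm) n13
  classical
  have hb := patB (decide (G.Adj u c1)) (decide (G.Adj u c2)) (decide (G.Adj u c3))
    (decide (G.Adj u c4)) (decide (G.Adj u c5))
    (by simpa using d1) (by simpa using d2) (by simpa using d3) (by simpa using d4)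
    (by simpa using d5)
    (by simpa using g1) (by simpa using g2) (by simpa using g3) (by simpa using g4)
    (by simpa using g5)
  simp only [Bool.and_eq_true, Bool.not_eq_true', decide_eq_true_eq,
    decide_eq_false_iff_not] at hb
  rcases hb with ⟨⟨⟨⟨x1, x2⟩, x3⟩, x4⟩, x5⟩ | ⟨⟨⟨⟨x1, x2⟩, x3⟩, x4⟩, x5⟩ | ⟨⟨⟨⟨x1, x2⟩, x3⟩, x4⟩, x5⟩ | ⟨⟨⟨⟨x1, x2⟩, x3⟩, x4⟩, x5⟩ | ⟨⟨⟨⟨x1, x2⟩, x3⟩, x4⟩, x5⟩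
  · exact Or.inl ⟨x1, x2, x3, x4, x5⟩
  · exact Or.inr (Or.inl ⟨x1, x2, x3, x4, x5⟩)
  · exact Or.inr (Or.inr (Or.inl ⟨x1, x2, x3, x4, x5⟩))
  · exact Or.inr (Or.inr (Or.inr (Or.inl ⟨x1, x2, x3, x4, x5⟩)))
  · exact Or.inr (Or.inr (Or.inr (Or.inr ⟨x1, x2, x3, x4, x5⟩)))

lemma noC5Wcore [Fintype V] [DecidableEq V] {K : Finset V} {v : V}
    (h2 : IndFree graph2K2 G) (hg : IndFree graphGem G)
    (hK : G.IsNClique G.cliqueNum K) (hv : v ∈ K) {c1 c2 c3 c4 c5 : V}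
    (m1 : ¬G.Adj v c1) (m2 : ¬G.Adj v c2) (m3 : ¬G.Adj v c3) (m4 : ¬G.Adj v c4)
    (m5 : ¬G.Adj v c5)
    (e12 : G.Adj c1 c2) (e23 : G.Adj c2 c3) (e34 : G.Adj c3 c4) (e45 : G.Adj c4 c5)
    (e51 : G.Adj c5 c1)
    (n13 : ¬G.Adj c1 c3) (n14 : ¬G.Adj c1 c4) (n24 : ¬G.Adj c2 c4) (n25 : ¬G.Adj c2 c5)
    (n35 : ¬G.Adj c3 c5) {u0 : V} (hu0e : u0 ∈ K.erase v)
    (hp : G.Adj u0 c1 ∧ G.Adj u0 c2 ∧ G.Adj u0 c4 ∧ ¬G.Adj u0 c3 ∧ ¬G.Adj u0 c5) : False := by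
  obtain ⟨p1, p2, p4, np3, np5⟩ := hp
  have hu0K := Finset.mem_of_mem_erase hu0e
  have hu0v := (Finset.mem_erase.mp hu0e).1
  have hall : ∀ u ∈ K.erase v, G.Adj u c1 ∧ G.Adj u c2 := by
    intro u hue
    by_cases hequ : u = u0
    · subst hequ; exact ⟨p1, p2⟩
    have huK := Finset.mem_of_mem_erase hue
    have huv := (Finset.mem_erase.mp hue).1
    rcases noC5Wpat h2 hg hK hv m1 m2 m3 m4 m5 e12 e23 e34 e45 e51 n13 n14 n24 n25 n35 hue with
      ⟨q1, q2, q4, nq3, nq5⟩ | ⟨q2, q3, q5, nq4, nq1⟩ | ⟨q3, q4, q1, nq5, nq2⟩ |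
      ⟨q4, q5, q2, nq1, nq3⟩ | ⟨q5, q1, q3, nq2, nq4⟩
    · exact ⟨q1, q2⟩
    · exact absurd (gemstepW hg hK hv hu0K huK hu0v huv (Ne.symm hequ)
        m2 m1 e12.symm p2 p1 q2 nq1) id
    · exact absurd (gemstepW hg hK hv hu0K huK hu0v huv (Ne.symm hequ)
        m1 m2 e12 p1 p2 q1 nq2) id
    · exact absurd (gemstepW hg hK hv hu0K huK hu0v huv (Ne.symm hequ)
        m2 m1 e12.symm p2 p1 q2 nq1) id
    · exact absurd (gemstepW hg hK hv hu0K huK hu0v huv (Ne.symm hequ)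
        m1 m2 e12 p1 p2 q1 nq2) id
  exact extend_clique hK hv m1 m2 e12 hall

/-- no induced C5 among the non-neighbors of `v` -/
lemma noC5W [Fintype V] [DecidableEq V] {K : Finset V} {v : V}
    (h2 : IndFree graph2K2 G) (hg : IndFree graphGem G)
    (hK : G.IsNClique G.cliqueNum K) (hv : v ∈ K) {c1 c2 c3 c4 c5 : V}
    (m1 : ¬G.Adj v c1) (m2 : ¬G.Adj v c2) (m3 : ¬G.Adj v c3) (m4 : ¬G.Adj v c4)
    (m5 : ¬G.Adj v c5)
    (e12 : G.Adj c1 c2) (e23 : G.Adj c2 c3) (e34 : G.Adj c3 c4) (e45 : G.Adj c4 c5)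
    (e51 : G.Adj c5 c1)
    (n13 : ¬G.Adj c1 c3) (n14 : ¬G.Adj c1 c4) (n24 : ¬G.Adj c2 c4) (n25 : ¬G.Adj c2 c5)
    (n35 : ¬G.Adj c3 c5) : False := by
  by_cases hKe : ∃ u0, u0 ∈ K.erase v
  · obtain ⟨u0, hu0e⟩ := hKe
    rcases noC5Wpat h2 hg hK hv m1 m2 m3 m4 m5 e12 e23 e34 e45 e51 n13 n14 n24 n25 n35 hu0e with
      P | P | P | P | P
    · exact noC5Wcore h2 hg hK hv m1 m2 m3 m4 m5 e12 e23 e34 e45 e51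
        n13 n14 n24 n25 n35 hu0e P
    · exact noC5Wcore h2 hg hK hv m2 m3 m4 m5 m1 e23 e34 e45 e51 e12
        n24 n25 n35 (fun h => n13 h.symm) (fun h => n14 h.symm) hu0e P
    · exact noC5Wcore h2 hg hK hv m3 m4 m5 m1 m2 e34 e45 e51 e12 e23
        n35 (fun h => n13 h.symm) (fun h => n14 h.symm) (fun h => n24 h.symm)
        (fun h => n25 h.symm) hu0e P
    · exact noC5Wcore h2 hg hK hv m4 m5 m1 m2 m3 e45 e51 e12 e23 e34
        (fun h => n14 h.symm) (fun h => n24 h.symm) (fun h => n25 h.symm)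
        (fun h => n35 h.symm) n13 hu0e P
    · exact noC5Wcore h2 hg hK hv m5 m1 m2 m3 m4 e51 e12 e23 e34 e45
        (fun h => n25 h.symm) (fun h => n35 h.symm) n13 n14 n24 hu0e P
  · push_neg at hKe
    exact extend_clique hK hv m1 m2 e12 (fun u hu => absurd hu (hKe u))

/-- the set of non-neighbors of a vertex of a maximum clique is 2-colorable -/
lemma Wcolorable [Fintype V] [DecidableEq V] {K : Finset V} {v : V}
    (h2 : IndFree graph2K2 G) (hg : IndFree graphGem G)
    (hK : G.IsNClique G.cliqueNum K) (hv : v ∈ K) :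
    (G.induce {u : V | u = v ∨ G.Adj v u}ᶜ).Colorable 2 := by
  classical
  set W : Set V := {u : V | u = v ∨ G.Adj v u}ᶜ with hW
  have hWmem : ∀ u : V, u ∈ W → u ≠ v ∧ ¬G.Adj v u := by
    intro u hu
    simp only [hW, Set.mem_compl_iff, Set.mem_setOf_eq, not_or] at hu
    exact hu
  by_cases hE : ∃ x y : V, x ∈ W ∧ y ∈ W ∧ G.Adj x y
  case neg =>
    push_neg at hE
    refine ⟨SimpleGraph.Coloring.mk (fun _ => 0) ?_⟩
    intro a b hab
    exact absurd (hE ↑a ↑b a.2 b.2) (not_not.mpr hab)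
  case pos =>
  obtain ⟨x, y, hx, hy, hxy⟩ := hE
  have noTri : ∀ a b c : V, a ∈ W → b ∈ W → c ∈ W →
      G.Adj a b → G.Adj a c → G.Adj b c → False := by
    intro a b c ha hb hc t1 t2 t3
    exact noTriW h2 hg hK hv (hWmem a ha).2 (hWmem b hb).2 (hWmem c hc).2 t1 t2 t3
  have keyB : ∀ z z' : V, z ∈ W → z' ∈ W → G.Adj z z' → ¬G.Adj x z → G.Adj y z →
      ¬G.Adj x z' → ¬G.Adj y z' → ∀ p : V, p ∈ W → G.Adj x p → G.Adj z' p → False := by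
    intro z z' hz hz' hzz' hxz hyz hxz' hyz' p hp hxp hz'p
    have hpz : ¬G.Adj p z := fun h => noTri p z z' hp hz hz' h hz'p.symm hzz'
    have hpy : ¬G.Adj p y := fun h => noTri x p y hx hp hy hxp hxy h
    exact noC5W h2 hg hK hv (hWmem x hx).2 (hWmem p hp).2 (hWmem z' hz').2 (hWmem z hz).2
      (hWmem y hy).2 hxp hz'p.symm hzz'.symm hyz.symm hxy.symm
      hxz' hxz hpz hpy (fun h => hyz' h.symm)
  refine ⟨SimpleGraph.Coloring.mk
    (fun u => if G.Adj x ↑u then 0 else if G.Adj y ↑u then 1 else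
      if ∃ p : V, p ∈ W ∧ G.Adj x p ∧ G.Adj (↑u : V) p then 1 else 0) ?_⟩
  intro a b hab
  have haW : (a : V) ∈ W := a.2
  have hbW : (b : V) ∈ W := b.2
  have hGab : G.Adj ↑a ↑b := hab
  by_cases hxa : G.Adj x ↑a
  · by_cases hya : G.Adj y ↑a
    · exact absurd (noTri x y ↑a hx hy haW hxy hxa hya) id
    by_cases hxb : G.Adj x ↑b
    · exact absurd (noTri x ↑a ↑b hx haW hbW hxa hxb hGab) id
    by_cases hyb : G.Adj y ↑b
    · simp only [if_pos hxa, if_neg hxb, if_pos hyb]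
      decide
    · have hap : ∃ p : V, p ∈ W ∧ G.Adj x p ∧ G.Adj (↑b : V) p := ⟨↑a, haW, hxa, hGab.symm⟩
      simp only [if_pos hxa, if_neg hxb, if_neg hyb, if_pos hap]
      decide
  · by_cases hya : G.Adj y ↑a
    · by_cases hxb : G.Adj x ↑b
      · by_cases hyb : G.Adj y ↑b
        · exact absurd (noTri x y ↑b hx hy hbW hxy hxb hyb) id
        · simp only [if_neg hxa, if_pos hya, if_pos hxb]
          decide
      · by_cases hyb : G.Adj y ↑b
        · exact absurd (noTri y ↑a ↑b hy haW hbW hya hyb hGab) id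
        · have hap : ¬∃ p : V, p ∈ W ∧ G.Adj x p ∧ G.Adj (↑b : V) p := by
            rintro ⟨p, hp, hxp, hbp⟩
            exact keyB ↑a ↑b haW hbW hGab hxa hya hxb hyb p hp hxp hbp
          simp only [if_neg hxa, if_pos hya, if_neg hxb, if_neg hyb, if_neg hap]
          decide
    · by_cases hxb : G.Adj x ↑b
      · have hap : ∃ p : V, p ∈ W ∧ G.Adj x p ∧ G.Adj (↑a : V) p := ⟨↑b, hbW, hxb, hGab⟩
        simp only [if_neg hxa, if_neg hya, if_pos hap, if_pos hxb]
        decide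
      · by_cases hyb : G.Adj y ↑b
        · have hap : ¬∃ p : V, p ∈ W ∧ G.Adj x p ∧ G.Adj (↑a : V) p := by
            rintro ⟨p, hp, hxp, hap2⟩
            exact keyB ↑b ↑a hbW haW hGab.symm hxb hyb hxa hya p hp hxp hap2
          simp only [if_neg hxa, if_neg hya, if_neg hap, if_neg hxb, if_pos hyb]
          decide
        · exact absurd (no2K2 h2 hxy hGab hxa hxb hya hyb) id

end W

/-- the closed neighborhood of any vertex of a gem-free graph is P4-free -/
lemma nbhdP4free (hg : IndFree graphGem G) (v : V) :
    IndFree graphP4 (G.induce {u : V | u = v ∨ G.Adj v u}) := by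
  constructor
  intro e
  set s : Set V := {u : V | u = v ∨ G.Adj v u} with hs
  have hadj : ∀ i j : Fin 4, graphP4.Adj i j → G.Adj ↑(e i) ↑(e j) :=
    fun i j h => e.map_rel_iff.mpr h
  have hnadj : ∀ i j : Fin 4, ¬graphP4.Adj i j → ¬G.Adj ↑(e i) ↑(e j) :=
    fun i j h hc => h (e.map_rel_iff.mp hc)
  have a01 : G.Adj ↑(e 0) ↑(e 1) := hadj 0 1 (by simp [graphP4, SimpleGraph.fromRel_adj])
  have a12 : G.Adj ↑(e 1) ↑(e 2) := hadj 1 2 (by simp [graphP4, SimpleGraph.fromRel_adj])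
  have a23 : G.Adj ↑(e 2) ↑(e 3) := hadj 2 3 (by simp [graphP4, SimpleGraph.fromRel_adj])
  have n02 : ¬G.Adj ↑(e 0) ↑(e 2) := hnadj 0 2 (by simp [graphP4, SimpleGraph.fromRel_adj])
  have n03 : ¬G.Adj ↑(e 0) ↑(e 3) := hnadj 0 3 (by simp [graphP4, SimpleGraph.fromRel_adj])
  have n13 : ¬G.Adj ↑(e 1) ↑(e 3) := hnadj 1 3 (by simp [graphP4, SimpleGraph.fromRel_adj])
  have hne : ∀ i j : Fin 4, i ≠ j → (↑(e i) : V) ≠ ↑(e j) :=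
    fun i j h hc => h (e.injective (Subtype.ext hc))
  have hnv : ∀ i j : Fin 4, i ≠ j → ¬G.Adj ↑(e i) ↑(e j) → (↑(e i) : V) ≠ v := by
    intro i j hij hnadj' hiv
    rcases (e j).2 with hjv | hjadj
    · exact hne i j hij (hiv.trans hjv.symm)
    · exact hnadj' (hiv ▸ hjadj)
  have h0 : (↑(e 0) : V) ≠ v := hnv 0 2 (by decide) n02
  have h1 : (↑(e 1) : V) ≠ v := hnv 1 3 (by decide) n13
  have h2 : (↑(e 2) : V) ≠ v := hnv 2 0 (by decide) (fun h => n02 h.symm)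
  have h3 : (↑(e 3) : V) ≠ v := hnv 3 1 (by decide) (fun h => n13 h.symm)
  have hv0 : G.Adj v ↑(e 0) := ((e 0).2.resolve_left h0)
  have hv1 : G.Adj v ↑(e 1) := ((e 1).2.resolve_left h1)
  have hv2 : G.Adj v ↑(e 2) := ((e 2).2.resolve_left h2)
  have hv3 : G.Adj v ↑(e 3) := ((e 3).2.resolve_left h3)
  exact noGem hg hv0 hv1 hv2 hv3 a01 a12 a23 n02 n03 n13

end Aux

/-- Every `(2K₂, K₁ + P₄)`-free graph `G` satisfies `χ(G) ≤ ω(G) + 2`. -/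
theorem stmt1 {V : Type*} [Fintype V] (G : SimpleGraph V)
    (h1 : IndFree graph2K2 G) (h2 : IndFree graphGem G) :
    G.chromaticNumber ≤ ((G.cliqueNum + 2 : ℕ) : ℕ∞) := by
  classical
  by_cases hne : Nonempty V
  case neg =>
    haveI : IsEmpty V := not_nonempty_iff.mp hne
    exact (SimpleGraph.Colorable.of_isEmpty (G := G) _).chromaticNumber_le
  obtain ⟨K, hK⟩ := G.exists_isNClique_cliqueNum
  have hom1 : 1 ≤ G.cliqueNum := one_le_cliqueNum_of_mem (G := G) hne.some
  have hKne : K.Nonempty := Finset.card_pos.mp (by rw [hK.card_eq]; omega)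
  obtain ⟨v, hv⟩ := hKne
  have hP4 : IndFree graphP4 (G.induce {u : V | u = v ∨ G.Adj v u}) := nbhdP4free h2 v
  have h2s : IndFree graph2K2 (G.induce {u : V | u = v ∨ G.Adj v u}) :=
    h1.induce {u : V | u = v ∨ G.Adj v u}
  have hc1 : (G.induce {u : V | u = v ∨ G.Adj v u}).Colorable G.cliqueNum := by
    have ht := tpAux (Fintype.card ↥{u : V | u = v ∨ G.Adj v u})
      ↥{u : V | u = v ∨ G.Adj v u} (G.induce {u : V | u = v ∨ G.Adj v u}) le_rfl h2s hP4
    refine ht.mono ?_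
    exact max_le (_root_.cliqueNum_induce_le (G := G) _) hom1
  have hc2 : (G.induce {u : V | u = v ∨ G.Adj v u}ᶜ).Colorable 2 := Wcolorable h1 h2 hK hv
  exact (colorable_sum hc1 hc2).chromaticNumber_le
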